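/- Let G be a graph, and let v be a vertex that dominates a neighbor u (i.e., N[u] ⊆ N[v]). If some maximum induced matching M of G satisfies v ∈ V(M), then there exists a maximum induced matching M' of G with {v,u} ∈ M'. -/

import Mathlib

variable {V : Type*}

/-- The set of endpoints of the edges of `M`. -/
def imSupp (M : Set (Sym2 V)) : Set V := {x | ∃ e ∈ M, x ∈ e}

/-- `M` is an induced matching of `G`: its edges are edges of `G` and every
vertex of `G[V(M)]` has degree exactly 1. -/
def IsIndMatching (G : SimpleGraph V) (M : Set (Sym2 V)) : Prop :=
  M ⊆ G.edgeSet ∧ ∀ v ∈ imSupp M, ∃! u, u ∈ imSupp M ∧ G.Adj v u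

theorem stmt5 [Fintype V] (G : SimpleGraph V) (v u : V) (hadj : G.Adj v u)
    -- v dominates u: N[u] ⊆ N[v]
    (hdom : (G.neighborSet u ∪ {u}) ⊆ (G.neighborSet v ∪ {v}))
    (M : Set (Sym2 V)) (hM : IsIndMatching G M)
    (hmax : ∀ M', IsIndMatching G M' → M'.ncard ≤ M.ncard)
    (hv : v ∈ imSupp M) :
    ∃ M', IsIndMatching G M' ∧ (∀ M'', IsIndMatching G M'' → M''.ncard ≤ M'.ncard) ∧
      s(v, u) ∈ M' := by
  classical
  by_cases hsu : s(v, u) ∈ M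
  · exact ⟨M, hM, hmax, hsu⟩
  obtain ⟨e, heM, hve⟩ := hv
  obtain ⟨w, rfl⟩ := Sym2.mem_iff_exists.mp hve
  have hvw : G.Adj v w := hM.1 heM
  have hw_supp : w ∈ imSupp M := ⟨_, heM, Sym2.mem_mk_right v w⟩
  have hv_supp : v ∈ imSupp M := ⟨_, heM, Sym2.mem_mk_left v w⟩
  have hdom' : ∀ x, G.Adj u x → G.Adj v x ∨ x = v := by
    intro x hx
    have hmem := hdom (Set.mem_union_left _ hx)
    rcases hmem with h | h
    · exact Or.inl h
    · exact Or.inr h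
  obtain ⟨x0, hx0, hx0uniq⟩ := hM.2 v hv_supp
  have huniqv : ∀ y, y ∈ imSupp M → G.Adj v y → y = w := by
    intro y hy hyadj
    rw [hx0uniq y ⟨hy, hyadj⟩, hx0uniq w ⟨hw_supp, hvw⟩]
  obtain ⟨x1, hx1, hx1uniq⟩ := hM.2 w hw_supp
  have huniqw : ∀ y, y ∈ imSupp M → G.Adj w y → y = v := by
    intro y hy hyadj
    rw [hx1uniq y ⟨hy, hyadj⟩, hx1uniq v ⟨hv_supp, hvw.symm⟩]
  have hu_nsupp : u ∉ imSupp M := fun hu => hsu (by rw [huniqv u hu hadj]; exact heM)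
  have hvu : v ≠ u := hadj.ne
  -- support of M \ {s(v,w)}
  have hsuppD : ∀ x, x ∈ imSupp (M \ {s(v,w)}) ↔ x ∈ imSupp M ∧ x ≠ v ∧ x ≠ w := by
    intro x
    constructor
    · rintro ⟨e', ⟨he'M, he'ne⟩, hxe'⟩
      rw [Set.mem_singleton_iff] at he'ne
      refine ⟨⟨e', he'M, hxe'⟩, ?_, ?_⟩
      · rintro rfl
        obtain ⟨b, rfl⟩ := Sym2.mem_iff_exists.mp hxe'
        have hb : b ∈ imSupp M := ⟨_, he'M, Sym2.mem_mk_right _ _⟩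
        have hbw : b = w := huniqv b hb (hM.1 he'M)
        exact he'ne (by rw [hbw])
      · rintro rfl
        obtain ⟨b, rfl⟩ := Sym2.mem_iff_exists.mp hxe'
        have hb : b ∈ imSupp M := ⟨_, he'M, Sym2.mem_mk_right _ _⟩
        have hbv : b = v := huniqw b hb (hM.1 he'M)
        subst hbv
        exact he'ne (Sym2.eq_swap)
    · rintro ⟨⟨e', he'M, hxe'⟩, hxv, hxw⟩
      refine ⟨e', ⟨he'M, ?_⟩, hxe'⟩
      rw [Set.mem_singleton_iff]
      rintro rfl
      rcases Sym2.mem_iff.mp hxe' with h | h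
      · exact hxv h
      · exact hxw h
  set M' : Set (Sym2 V) := insert s(v, u) (M \ {s(v, w)}) with hM'def
  have hsupp' : ∀ x, x ∈ imSupp M' ↔ x = v ∨ x = u ∨ (x ∈ imSupp M ∧ x ≠ v ∧ x ≠ w) := by
    intro x
    constructor
    · rintro ⟨e', he', hxe'⟩
      rcases he' with rfl | he'
      · rcases Sym2.mem_iff.mp hxe' with h | h
        · exact Or.inl h
        · exact Or.inr (Or.inl h)
      · exact Or.inr (Or.inr ((hsuppD x).mp ⟨e', he', hxe'⟩))
    · rintro (h | h | hx)
      · rw [h]; exact ⟨s(v, u), Or.inl rfl, Sym2.mem_mk_left _ _⟩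
      · rw [h]; exact ⟨s(v, u), Or.inl rfl, Sym2.mem_mk_right _ _⟩
      · obtain ⟨e', he', hxe'⟩ := (hsuppD x).mpr hx
        exact ⟨e', Or.inr he', hxe'⟩
  have hv' : v ∈ imSupp M' := (hsupp' v).mpr (Or.inl rfl)
  have hu' : u ∈ imSupp M' := (hsupp' u).mpr (Or.inr (Or.inl rfl))
  have hM' : IsIndMatching G M' := by
    constructor
    · rintro e' (rfl | he')
      · exact hadj
      · exact hM.1 he'.1
    · intro x hx
      rcases (hsupp' x).mp hx with rfl | rfl | hxx
      · -- x = v, unique neighbor u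
        refine ⟨u, ⟨hu', hadj⟩, ?_⟩
        rintro y ⟨hy, hyadj⟩
        rcases (hsupp' y).mp hy with rfl | rfl | hyy
        · exact absurd hyadj (G.loopless.irrefl _)
        · rfl
        · exact absurd (huniqv y hyy.1 hyadj) hyy.2.2
      · -- x = u, unique neighbor v
        refine ⟨v, ⟨hv', hadj.symm⟩, ?_⟩
        rintro y ⟨hy, hyadj⟩
        rcases (hsupp' y).mp hy with rfl | rfl | hyy
        · rfl
        · exact absurd hyadj (G.loopless.irrefl _)
        · rcases hdom' y hyadj with h | h
          · exact absurd (huniqv y hyy.1 h) hyy.2.2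
          · exact h
      · -- x ∈ imSupp M, x ≠ v, x ≠ w
        obtain ⟨hxM, hxv, hxw⟩ := hxx
        obtain ⟨x', ⟨hx'M, hx'adj⟩, hx'uniq⟩ := hM.2 x hxM
        have hx'v : x' ≠ v := by
          rintro rfl
          exact hxw (huniqv x hxM hx'adj.symm)
        have hx'w : x' ≠ w := by
          rintro rfl
          exact hxv (huniqw x hxM hx'adj.symm)
        refine ⟨x', ⟨(hsupp' x').mpr (Or.inr (Or.inr ⟨hx'M, hx'v, hx'w⟩)), hx'adj⟩, ?_⟩
        rintro y ⟨hy, hyadj⟩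
        rcases (hsupp' y).mp hy with rfl | rfl | hyy
        · exact absurd (huniqv x hxM hyadj.symm) hxw
        · rcases hdom' x hyadj.symm with h | h
          · exact absurd (huniqv x hxM h) hxw
          · exact absurd h hxv
        · exact hx'uniq y ⟨hyy.1, hyadj⟩
  have hnotmem : s(v, u) ∉ M \ {s(v, w)} := fun h => hsu h.1
  have hcard : M'.ncard = M.ncard := by
    rw [hM'def, Set.ncard_insert_of_notMem hnotmem (Set.toFinite _),
        Set.ncard_diff_singleton_add_one heM]
  exact ⟨M', hM', fun M'' hM'' => hcard ▸ hmax M'' hM'', Or.inl rfl⟩
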